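/- (Point-count version of the main recursion.) Let K be a finite field with q elements and fix integers d, r ≥ 1 and n ≥ 0. Let N_k denote the number of GL_k(K)-orbits on the set U^k_{r,d}(K) of full-span tuples on K^k. Then N_n · |GL_n(K)| = q^{d n² + r n} − Σ_{k=0}^{n−1} N_k · |GL_k(K)| · c_q(k,n) · q^{d·n·(n−k)}, where c_q(k,n) is the number of k-dimensional K-subspaces of K^n. -/

import Mathlib

/-- `tupleSpan K T v` is the `K`-linear span of all vectors of the form
`T i₁ ∘ ⋯ ∘ T iₘ (v j)`, where `m ≥ 0` and `1 ≤ j ≤ r`. -/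
def tupleSpan (K : Type*) {V : Type*} [Field K] [AddCommGroup V] [Module K V]
    {d r : ℕ} (T : Fin d → Module.End K V) (v : Fin r → V) : Submodule K V :=
  Submodule.span K {w | ∃ (l : List (Fin d)) (j : Fin r), w = ((l.map T).prod) (v j)}

/-- The action of `GL_k(K)` on tuples: simultaneous conjugation on the endomorphisms and the
natural action on the vectors. -/
def glAct {K : Type*} [Field K] {d r k : ℕ} (g : (Fin k → K) ≃ₗ[K] (Fin k → K))
    (x : (Fin d → Module.End K (Fin k → K)) × (Fin r → (Fin k → K))) :
    (Fin d → Module.End K (Fin k → K)) × (Fin r → (Fin k → K)) :=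
  (fun i => g.toLinearMap ∘ₗ x.1 i ∘ₗ g.symm.toLinearMap, fun j => g (x.2 j))

/-- `N_k`: the number of `GL_k(K)`-orbits on the set of full-span tuples on `K^k`. -/
noncomputable def numOrbits (K : Type*) [Field K] (d r k : ℕ) : ℕ :=
  Nat.card (Quot (fun x y : {x : (Fin d → Module.End K (Fin k → K)) ×
      (Fin r → (Fin k → K)) // tupleSpan K x.1 x.2 = ⊤} =>
    ∃ g : (Fin k → K) ≃ₗ[K] (Fin k → K), glAct g x.1 = y.1))

/-- `|GL_k(K)|`. -/
noncomputable def cardGL (K : Type*) [Field K] (k : ℕ) : ℕ :=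
  Nat.card ((Fin k → K) ≃ₗ[K] (Fin k → K))

/-! ### Auxiliary material -/

open Module

section aux

variable {K : Type*} [Field K] {d r : ℕ}

instance finiteLinearMapAux {V W : Type*} [AddCommGroup V] [Module K V] [AddCommGroup W]
    [Module K W] [Finite V] [Finite W] : Finite (V →ₗ[K] W) :=
  Finite.of_injective (fun f => (f : V → W)) (fun _ _ h => LinearMap.ext fun x => congrFun h x)

variable {V V' : Type*} [AddCommGroup V] [Module K V] [AddCommGroup V'] [Module K V']

lemma prod_conj_apply (e : V ≃ₗ[K] V') (T : Fin d → Module.End K V) (l : List (Fin d)) (x : V) :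
    ((l.map fun i => e.toLinearMap ∘ₗ T i ∘ₗ e.symm.toLinearMap).prod) (e x)
      = e (((l.map T).prod) x) := by
  induction l generalizing x with
  | nil => simp
  | cons a l ih =>
      simp only [List.map_cons, List.prod_cons, Module.End.mul_apply, ih, LinearMap.coe_comp,
        Function.comp_apply, LinearEquiv.coe_coe, LinearEquiv.symm_apply_apply]

lemma tupleSpan_map (e : V ≃ₗ[K] V') (T : Fin d → Module.End K V) (v : Fin r → V) :
    tupleSpan K (fun i => e.toLinearMap ∘ₗ T i ∘ₗ e.symm.toLinearMap) (fun j => e (v j))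
      = (tupleSpan K T v).map (e : V →ₗ[K] V') := by
  rw [tupleSpan, tupleSpan, Submodule.map_span]
  congr 1
  ext w
  constructor
  · rintro ⟨l, j, rfl⟩
    exact ⟨((l.map T).prod) (v j), ⟨l, j, rfl⟩, (prod_conj_apply e T l (v j)).symm⟩
  · rintro ⟨z, ⟨l, j, rfl⟩, rfl⟩
    exact ⟨l, j, (prod_conj_apply e T l (v j)).symm⟩

lemma prod_restrict_apply {W : Submodule K V} (T : Fin d → Module.End K V)
    (hT : ∀ i, ∀ x ∈ W, T i x ∈ W) (l : List (Fin d)) (p : W) :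
    (((l.map fun i => (T i).restrict (hT i)).prod) p : V) = ((l.map T).prod) (p : V) := by
  induction l generalizing p with
  | nil => simp
  | cons a l ih =>
      simp only [List.map_cons, List.prod_cons, Module.End.mul_apply,
        LinearMap.restrict_coe_apply, ih]

lemma tupleSpan_restrict {W : Submodule K V} (T : Fin d → Module.End K V) (v : Fin r → V)
    (hT : ∀ i, ∀ x ∈ W, T i x ∈ W) (hv : ∀ j, v j ∈ W) :
    (tupleSpan K (fun i => (T i).restrict (hT i)) (fun j => ⟨v j, hv j⟩)).map W.subtype
      = tupleSpan K T v := by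
  rw [tupleSpan, tupleSpan, Submodule.map_span]
  congr 1
  ext w
  constructor
  · rintro ⟨z, ⟨l, j, rfl⟩, rfl⟩
    exact ⟨l, j, prod_restrict_apply T hT l _⟩
  · rintro ⟨l, j, rfl⟩
    exact ⟨_, ⟨l, j, rfl⟩, prod_restrict_apply T hT l _⟩

lemma mem_tupleSpan_v (T : Fin d → Module.End K V) (v : Fin r → V) (j : Fin r) :
    v j ∈ tupleSpan K T v :=
  Submodule.subset_span ⟨[], j, by simp⟩

lemma tupleSpan_invariant (T : Fin d → Module.End K V) (v : Fin r → V) (i : Fin d) :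
    ∀ x ∈ tupleSpan K T v, T i x ∈ tupleSpan K T v := by
  intro x hx
  have : (tupleSpan K T v).map (T i) ≤ tupleSpan K T v := by
    rw [tupleSpan, Submodule.map_span, Submodule.span_le]
    rintro w ⟨z, ⟨l, j, rfl⟩, rfl⟩
    exact Submodule.subset_span ⟨i :: l, j, by simp⟩
  exact this ⟨x, hx, rfl⟩

lemma inv_of_span_eq {W : Submodule K V} {T : Fin d → Module.End K V} {v : Fin r → V}
    (hx : tupleSpan K T v = W) : ∀ i, ∀ z ∈ W, T i z ∈ W := by
  intro i z hz
  rw [← hx] at hz ⊢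
  exact tupleSpan_invariant T v i z hz

lemma mem_of_span_eq {W : Submodule K V} {T : Fin d → Module.End K V} {v : Fin r → V}
    (hx : tupleSpan K T v = W) : ∀ j, v j ∈ W := by
  intro j; rw [← hx]; exact mem_tupleSpan_v T v j

/-- Transport full-span tuples along a linear equivalence. -/
noncomputable def fullEquiv (e : V ≃ₗ[K] V') :
    {x : (Fin d → Module.End K V) × (Fin r → V) // tupleSpan K x.1 x.2 = ⊤} ≃
      {x : (Fin d → Module.End K V') × (Fin r → V') // tupleSpan K x.1 x.2 = ⊤} where
  toFun x := ⟨(fun i => e.toLinearMap ∘ₗ x.1.1 i ∘ₗ e.symm.toLinearMap, fun j => e (x.1.2 j)),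
    by rw [tupleSpan_map, x.2, Submodule.map_top, LinearEquiv.range]⟩
  invFun x := ⟨(fun i => e.symm.toLinearMap ∘ₗ x.1.1 i ∘ₗ e.toLinearMap, fun j => e.symm (x.1.2 j)),
    by
      have := tupleSpan_map (e := e.symm) (T := x.1.1) (v := x.1.2)
      simp only [LinearEquiv.symm_symm] at this
      rw [this, x.2, Submodule.map_top, LinearEquiv.range]⟩
  left_inv x := by
    apply Subtype.ext
    refine Prod.ext (funext fun i => ?_) (funext fun j => ?_)
    · ext z; simp
    · simp
  right_inv x := by
    apply Subtype.ext
    refine Prod.ext (funext fun i => ?_) (funext fun j => ?_)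
    · ext z; simp
    · simp

variable (W C : Submodule K V) (h : IsCompl W C)

/-- Build an endomorphism of `V` from an endomorphism of `W` and a map on a complement. -/
noncomputable def buildT (A : Module.End K ↥W) (B : ↥C →ₗ[K] V) : Module.End K V :=
  W.subtype ∘ₗ A ∘ₗ W.projectionOnto C h + B ∘ₗ C.projectionOnto W h.symm

lemma buildT_mem (A : Module.End K ↥W) (B : ↥C →ₗ[K] V) :
    ∀ z ∈ W, buildT W C h A B z ∈ W := by
  intro z hz
  simp only [buildT, LinearMap.add_apply, LinearMap.coe_comp, Function.comp_apply,
    Submodule.coe_subtype]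
  rw [show z = ((⟨z, hz⟩ : W) : V) from rfl, Submodule.projectionOnto_apply_left,
    Submodule.projectionOnto_apply_of_mem_right h.symm hz, map_zero, add_zero]
  exact (A ⟨z, hz⟩).2

lemma buildT_restrict (A : Module.End K ↥W) (B : ↥C →ₗ[K] V) :
    (buildT W C h A B).restrict (buildT_mem W C h A B) = A := by
  ext p
  have : ((buildT W C h A B).restrict (buildT_mem W C h A B) p : V) = buildT W C h A B p :=
    rfl
  simp only [buildT, LinearMap.add_apply, LinearMap.coe_comp, Function.comp_apply,
    Submodule.coe_subtype] at this ⊢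
  rw [this, Submodule.projectionOnto_apply_left,
    Submodule.projectionOnto_apply_right h.symm p, map_zero, add_zero]

lemma buildT_comp_subtype (A : Module.End K ↥W) (B : ↥C →ₗ[K] V) :
    (buildT W C h A B) ∘ₗ C.subtype = B := by
  ext c
  simp only [buildT, LinearMap.add_apply, LinearMap.coe_comp, Function.comp_apply,
    Submodule.coe_subtype]
  rw [Submodule.projectionOnto_apply_of_mem_right h c.2,
    Submodule.projectionOnto_apply_left h.symm c, map_zero]
  simp

lemma buildT_rebuild (T : Module.End K V) (hT : ∀ z ∈ W, T z ∈ W) :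
    buildT W C h (T.restrict hT) (T ∘ₗ C.subtype) = T := by
  ext z
  simp only [buildT, LinearMap.add_apply, LinearMap.coe_comp, Function.comp_apply,
    Submodule.coe_subtype, LinearMap.restrict_coe_apply]
  rw [← map_add]
  congr 1
  exact Submodule.projection_add_projection_eq_self h z

/-- The fiber of `tupleSpan` over `W` is equivalent to full-span tuples on `W` times arbitrary
maps on a complement. -/
noncomputable def fiberEquiv :
    {x : (Fin d → Module.End K V) × (Fin r → V) // tupleSpan K x.1 x.2 = W} ≃
      ({y : (Fin d → Module.End K ↥W) × (Fin r → ↥W) // tupleSpan K y.1 y.2 = ⊤} ×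
        (Fin d → (↥C →ₗ[K] V))) where
  toFun x :=
    ⟨⟨(fun i => (x.1.1 i).restrict (inv_of_span_eq x.2 i),
        fun j => ⟨x.1.2 j, mem_of_span_eq x.2 j⟩),
      by
        apply Submodule.map_injective_of_injective W.injective_subtype
        rw [tupleSpan_restrict, x.2, Submodule.map_subtype_top]⟩,
      fun i => (x.1.1 i) ∘ₗ C.subtype⟩
  invFun y :=
    ⟨(fun i => buildT W C h (y.1.1.1 i) (y.2 i), fun j => (y.1.1.2 j : V)),
      by
        rw [← tupleSpan_restrict (W := W) _ _ (fun i => buildT_mem W C h (y.1.1.1 i) (y.2 i))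
          (fun j => (y.1.1.2 j).2)]
        have h1 : (fun i => (buildT W C h (y.1.1.1 i) (y.2 i)).restrict
            (buildT_mem W C h (y.1.1.1 i) (y.2 i))) = y.1.1.1 :=
          funext fun i => buildT_restrict W C h (y.1.1.1 i) (y.2 i)
        have h2 : (fun j => (⟨(y.1.1.2 j : V), (y.1.1.2 j).2⟩ : ↥W)) = y.1.1.2 :=
          funext fun j => rfl
        rw [h1, h2, y.1.2, Submodule.map_subtype_top]⟩
  left_inv x := by
    apply Subtype.ext
    refine Prod.ext (funext fun i => ?_) rfl
    show buildT W C h ((x.1.1 i).restrict (inv_of_span_eq x.2 i)) ((x.1.1 i) ∘ₗ C.subtype)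
      = x.1.1 i
    exact buildT_rebuild W C h (x.1.1 i) _
  right_inv y := by
    refine Prod.ext (Subtype.ext (Prod.ext (funext fun i => ?_) (funext fun j => rfl)))
      (funext fun i => ?_)
    · exact buildT_restrict W C h (y.1.1.1 i) (y.2 i)
    · exact buildT_comp_subtype W C h (y.1.1.1 i) (y.2 i)

end aux

section orbits

variable {K : Type*} [Field K] {d r k : ℕ}

abbrev Tup (K : Type*) [Field K] (d r k : ℕ) :=
  (Fin d → Module.End K (Fin k → K)) × (Fin r → (Fin k → K))

lemma glAct_one (x : Tup K d r k) : glAct 1 x = x := by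
  refine Prod.ext (funext fun i => ?_) (funext fun j => rfl)
  ext z
  rfl

lemma glAct_mul (g g' : (Fin k → K) ≃ₗ[K] (Fin k → K)) (x : Tup K d r k) :
    glAct (g * g') x = glAct g (glAct g' x) := by
  refine Prod.ext (funext fun i => ?_) (funext fun j => rfl)
  ext z
  rfl

lemma glAct_span (g : (Fin k → K) ≃ₗ[K] (Fin k → K)) (x : Tup K d r k) :
    tupleSpan K (glAct g x).1 (glAct g x).2 = (tupleSpan K x.1 x.2).map (g : _ →ₗ[K] _) :=
  tupleSpan_map g x.1 x.2

lemma glAct_span_top (g : (Fin k → K) ≃ₗ[K] (Fin k → K)) (x : Tup K d r k)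
    (hx : tupleSpan K x.1 x.2 = ⊤) : tupleSpan K (glAct g x).1 (glAct g x).2 = ⊤ := by
  rw [glAct_span, hx, Submodule.map_top, LinearEquiv.range]

lemma glAct_free (g : (Fin k → K) ≃ₗ[K] (Fin k → K)) (x : Tup K d r k)
    (hx : tupleSpan K x.1 x.2 = ⊤) (hg : glAct g x = x) : g = 1 := by
  have h1 : ∀ i, g.toLinearMap ∘ₗ x.1 i ∘ₗ g.symm.toLinearMap = x.1 i :=
    fun i => congrFun (congrArg Prod.fst hg) i
  have h2 : ∀ j, g (x.2 j) = x.2 j := fun j => congrFun (congrArg Prod.snd hg) j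
  have hcomm : ∀ i z, g (x.1 i z) = x.1 i (g z) := by
    intro i z
    have := congrFun (congrArg (DFunLike.coe) (h1 i)) (g z)
    simpa using this
  have hfix : ∀ z ∈ tupleSpan K x.1 x.2, g z = z := by
    intro z hz
    have hle : tupleSpan K x.1 x.2 ≤ LinearMap.eqLocus g.toLinearMap LinearMap.id := by
      rw [tupleSpan, Submodule.span_le]
      rintro w ⟨l, j, rfl⟩
      induction l with
      | nil => simpa using h2 j
      | cons a l ih =>
          simp only [List.map_cons, List.prod_cons, Module.End.mul_apply]
          show g _ = _
          rw [hcomm a]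
          have : g ((l.map x.1).prod (x.2 j)) = (l.map x.1).prod (x.2 j) := ih
          rw [this]
          rfl
    exact hle hz
  refine LinearEquiv.ext fun z => ?_
  show g z = z
  exact hfix z (hx ▸ Submodule.mem_top)

lemma card_fullTup_eq (k : ℕ) :
    Nat.card {x : Tup K d r k // tupleSpan K x.1 x.2 = ⊤}
      = numOrbits K d r k * cardGL K k := by
  classical
  set X := {x : Tup K d r k // tupleSpan K x.1 x.2 = ⊤}
  set rel := fun x y : X => ∃ g : (Fin k → K) ≃ₗ[K] (Fin k → K), glAct g x.1 = y.1 with hrel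
  have hequiv : Equivalence rel := by
    constructor
    · exact fun x => ⟨1, glAct_one x.1⟩
    · rintro x y ⟨g, hg⟩
      refine ⟨g⁻¹, ?_⟩
      rw [← hg, ← glAct_mul, inv_mul_cancel, glAct_one]
    · rintro x y z ⟨g, hg⟩ ⟨g', hg'⟩
      exact ⟨g' * g, by rw [glAct_mul, hg, hg']⟩
  set φ : Quot rel × ((Fin k → K) ≃ₗ[K] (Fin k → K)) → X :=
    fun p => ⟨glAct p.2 (p.1.out).1, glAct_span_top _ _ (p.1.out).2⟩ with hφ
  have hbij : Function.Bijective φ := by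
    constructor
    · rintro ⟨o, g⟩ ⟨o', g'⟩ hp
      have hval : glAct g (o.out).1 = glAct g' (o'.out).1 := congrArg Subtype.val hp
      have hoo' : rel o.out o'.out := by
        refine ⟨g'⁻¹ * g, ?_⟩
        rw [glAct_mul, hval, ← glAct_mul, inv_mul_cancel, glAct_one]
      have ho : o = o' := by
        rw [← Quot.out_eq o, ← Quot.out_eq o']
        exact Quot.sound hoo'
      subst ho
      have : glAct (g'⁻¹ * g) (o.out).1 = (o.out).1 := by
        rw [glAct_mul, hval, ← glAct_mul, inv_mul_cancel, glAct_one]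
      have hone := glAct_free _ _ (o.out).2 this
      have : g = g' := by
        have := congrArg (fun h => g' * h) hone
        simpa [mul_assoc] using this
      rw [this]
    · intro x
      have hx : Quot.mk rel ((Quot.mk rel x).out) = Quot.mk rel x := Quot.out_eq _
      have hrx : rel ((Quot.mk rel x).out) x :=
        (Equivalence.eqvGen_iff hequiv).mp (Quot.eqvGen_exact hx)
      obtain ⟨g, hg⟩ := hrx
      exact ⟨⟨Quot.mk rel x, g⟩, Subtype.ext hg⟩
  have := Nat.card_congr (Equiv.ofBijective φ hbij)
  rw [Nat.card_prod] at this
  rw [← this, numOrbits, cardGL]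

end orbits

section counting

variable {K : Type*} [Field K] [Fintype K] {d r : ℕ}

lemma card_lin (a b : ℕ) :
    Nat.card ((Fin a → K) →ₗ[K] (Fin b → K)) = Fintype.card K ^ (b * a) := by
  classical
  rw [Nat.card_congr (LinearMap.toMatrix' (R := K) (m := Fin b) (n := Fin a)).toEquiv]
  have : Nat.card (Matrix (Fin b) (Fin a) K) = Nat.card (Fin b → Fin a → K) := rfl
  rw [this, Nat.card_eq_fintype_card, Fintype.card_fun, Fintype.card_fun, Fintype.card_fin,
    Fintype.card_fin, ← pow_mul]
  congr 1
  ring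

lemma card_fiber (n : ℕ) (W : Submodule K (Fin n → K)) :
    Nat.card {x : Tup K d r n // tupleSpan K x.1 x.2 = W}
      = (numOrbits K d r (finrank K ↥W) * cardGL K (finrank K ↥W)) *
          Fintype.card K ^ (d * n * (n - finrank K ↥W)) := by
  classical
  obtain ⟨C, hC⟩ := Submodule.exists_isCompl W
  rw [Nat.card_congr (fiberEquiv W C hC), Nat.card_prod]
  obtain ⟨e⟩ := FiniteDimensional.nonempty_linearEquiv_of_finrank_eq (R := K)
    (M := ↥W) (M' := (Fin (finrank K ↥W) → K)) (by simp)
  rw [Nat.card_congr (fullEquiv e), card_fullTup_eq]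
  have hn : finrank K (Fin n → K) = n := by simp
  have hW : finrank K ↥W ≤ n := by have := Submodule.finrank_le W; omega
  have hc : finrank K ↥C = n - finrank K ↥W := by
    have := Submodule.finrank_add_eq_of_isCompl hC
    omega
  obtain ⟨e2⟩ := FiniteDimensional.nonempty_linearEquiv_of_finrank_eq (R := K)
    (M := ↥C) (M' := (Fin (n - finrank K ↥W) → K)) (by simp [hc])
  have : Nat.card (↥C →ₗ[K] (Fin n → K)) = Fintype.card K ^ (n * (n - finrank K ↥W)) := by
    rw [Nat.card_congr (e2.arrowCongr (LinearEquiv.refl K (Fin n → K))).toEquiv, card_lin]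
  rw [Nat.card_pi, Finset.prod_const, this, Finset.card_univ, Fintype.card_fin, ← pow_mul]
  congr 1
  ring

lemma card_tup (n : ℕ) :
    Nat.card (Tup K d r n) = Fintype.card K ^ (d * n ^ 2 + r * n) := by
  classical
  rw [Nat.card_prod, Nat.card_pi, Nat.card_pi]
  have h1 : Nat.card (Module.End K (Fin n → K)) = Fintype.card K ^ (n * n) :=
    card_lin n n
  have h2 : Nat.card (Fin n → K) = Fintype.card K ^ n := by
    rw [Nat.card_eq_fintype_card]; simp [Fintype.card_fun]
  rw [Finset.prod_const, Finset.prod_const, h1, h2, Finset.card_univ, Finset.card_univ,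
    Fintype.card_fin, Fintype.card_fin, ← pow_mul, ← pow_mul, ← pow_add]
  congr 1
  ring

lemma card_total_eq_sum (n : ℕ) :
    Nat.card (Tup K d r n) = ∑ k ∈ Finset.range (n + 1),
      Nat.card {Λ : Submodule K (Fin n → K) // finrank K ↥Λ = k} *
        ((numOrbits K d r k * cardGL K k) * Fintype.card K ^ (d * n * (n - k))) := by
  classical
  letI : Fintype (Tup K d r n) := Fintype.ofFinite _
  letI : Fintype (Submodule K (Fin n → K)) := Fintype.ofFinite _
  letI : ∀ W : Submodule K (Fin n → K), Fintype {x : Tup K d r n // tupleSpan K x.1 x.2 = W} :=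
    fun W => Fintype.ofFinite _
  rw [Nat.card_eq_fintype_card,
    Fintype.card_congr (Equiv.sigmaFiberEquiv (fun x : Tup K d r n => tupleSpan K x.1 x.2)).symm,
    Fintype.card_sigma]
  have hmaps : ∀ W : Submodule K (Fin n → K), W ∈ (Finset.univ : Finset (Submodule K (Fin n → K)))
      → finrank K ↥W ∈ Finset.range (n + 1) := by
    intro W _
    have hn : finrank K (Fin n → K) = n := by simp
    have h2 := Submodule.finrank_le W
    exact Finset.mem_range.mpr (by omega)
  rw [← Finset.sum_fiberwise_of_maps_to hmaps
    (fun W => Fintype.card {x : Tup K d r n // tupleSpan K x.1 x.2 = W})]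
  refine Finset.sum_congr rfl fun k hk => ?_
  have : ∀ W ∈ Finset.filter (fun W : Submodule K (Fin n → K) => finrank K ↥W = k) Finset.univ,
      Fintype.card {x : Tup K d r n // tupleSpan K x.1 x.2 = W}
        = (numOrbits K d r k * cardGL K k) * Fintype.card K ^ (d * n * (n - k)) := by
    intro W hW
    have hk' : finrank K ↥W = k := (Finset.mem_filter.mp hW).2
    rw [← Nat.card_eq_fintype_card, card_fiber, hk']
  rw [Finset.sum_congr rfl this, Finset.sum_const, smul_eq_mul]
  congr 1
  rw [Nat.card_eq_fintype_card, Fintype.card_subtype]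

lemma card_tup_sum (n : ℕ) :
    Fintype.card K ^ (d * n ^ 2 + r * n) = ∑ k ∈ Finset.range (n + 1),
      Nat.card {Λ : Submodule K (Fin n → K) // finrank K ↥Λ = k} *
        ((numOrbits K d r k * cardGL K k) * Fintype.card K ^ (d * n * (n - k))) := by
  rw [← card_tup (d := d) (r := r) n]
  exact card_total_eq_sum n

lemma card_top_subtype (n : ℕ) :
    Nat.card {Λ : Submodule K (Fin n → K) // finrank K ↥Λ = n} = 1 := by
  have hn : finrank K (Fin n → K) = n := by simp
  haveI : Unique {Λ : Submodule K (Fin n → K) // finrank K ↥Λ = n} :=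
    { default := ⟨⊤, by rw [finrank_top]; exact hn⟩
      uniq := fun Λ => Subtype.ext (Submodule.eq_top_of_finrank_eq (by rw [Λ.2, hn])) }
  exact Nat.card_unique

end counting

/-- Point-count version of the main recursion:
`N_n·|GL_n(K)| = q^(dn²+rn) − Σ_{k=0}^{n-1} N_k·|GL_k(K)|·c_q(k,n)·q^(d·n·(n−k))`. -/
theorem stmt_8 {K : Type*} [Field K] [Fintype K] {q d r n : ℕ}
    (hq : Fintype.card K = q) (hd : 1 ≤ d) (hr : 1 ≤ r) :
    (numOrbits K d r n * cardGL K n : ℤ) =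
      (q : ℤ) ^ (d * n ^ 2 + r * n) -
        ∑ k ∈ Finset.range n,
          (numOrbits K d r k : ℤ) * cardGL K k *
            Nat.card {Λ : Submodule K (Fin n → K) // Module.finrank K Λ = k} *
            (q : ℤ) ^ (d * n * (n - k)) := by
  subst hq
  have h := card_tup_sum (K := K) (d := d) (r := r) n
  rw [Finset.sum_range_succ, card_top_subtype, Nat.sub_self, Nat.mul_zero, pow_zero, mul_one,
    one_mul] at h
  have h' : ((Fintype.card K : ℤ)) ^ (d * n ^ 2 + r * n) =
      (∑ k ∈ Finset.range n,
        (Nat.card {Λ : Submodule K (Fin n → K) // finrank K ↥Λ = k} : ℤ) *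
          ((numOrbits K d r k * cardGL K k) * (Fintype.card K : ℤ) ^ (d * n * (n - k))))
        + (numOrbits K d r n * cardGL K n : ℤ) := by
    exact_mod_cast congrArg (Nat.cast : ℕ → ℤ) h
  rw [eq_sub_iff_add_eq, h', add_comm]
  congr 1
  exact Finset.sum_congr rfl (fun k _ => by ring)
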